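/- Lower bound and prox-center for E*: assume the convex conjugate E* is β-strongly convex on Δ with respect to the ℓ1-norm for some β > 0. Then the vector p₀ ∈ Δ defined by p₀⁽ⁱ⁾ = μ({x ∈ ℝⁿ : x⁽ⁱ⁾ ≥ x⁽ʲ⁾ for all j = 1,…,n}) is the unique minimizer of E* over Δ, its value is E*(p₀) = − 𝔼[max_{1≤i≤n} ε⁽ⁱ⁾], and consequently E*(p) ≥ − 𝔼[max_{1≤i≤n} ε⁽ⁱ⁾] for all p ∈ Δ. -/

import Mathlib

open MeasureTheory

/-- Lower bound and prox-center for `E*`: if `E*` is `β`-strongly convex on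
`Δ` w.r.t. the `ℓ1`-norm, then the vector `p₀` of zero-utility choice probabilities lies in
`Δ`, is the unique minimizer of `E*` over `Δ`, its value is `E*(p₀) = −𝔼[max_i ε⁽ⁱ⁾]`, and
`E*(p) ≥ −𝔼[max_i ε⁽ⁱ⁾]` for all `p ∈ Δ`. -/
theorem prox_center_lower_bound
    (n : ℕ) (hn : 2 ≤ n)
    (μ : Measure (Fin n → ℝ)) [IsProbabilityMeasure μ]
    (hint : ∀ i : Fin n, Integrable (fun x : Fin n → ℝ => x i) μ)
    (hac : μ ≪ (volume : Measure (Fin n → ℝ)))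
    (hsupp : ∀ U : Set (Fin n → ℝ), IsOpen U → U.Nonempty → 0 < μ U)
    (E : (Fin n → ℝ) → ℝ)
    (hE : ∀ u : Fin n → ℝ, E u = ∫ x, (⨆ i : Fin n, (u i + x i)) ∂μ)
    (Estar : (Fin n → ℝ) → ℝ)
    (hEstar : ∀ p : Fin n → ℝ,
      Estar p = sSup {y : ℝ | ∃ u : Fin n → ℝ, y = ∑ i, p i * u i - E u})
    (β : ℝ) (hβ : 0 < β)
    (hsc : ∀ p ∈ {p : Fin n → ℝ | ∑ i, p i = 1 ∧ ∀ i, 0 ≤ p i},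
      ∀ q ∈ {p : Fin n → ℝ | ∑ i, p i = 1 ∧ ∀ i, 0 ≤ p i},
      ∀ α ∈ Set.Icc (0 : ℝ) 1,
        Estar (α • p + (1 - α) • q)
          ≤ α * Estar p + (1 - α) * Estar q
            - β / 2 * α * (1 - α) * (∑ i, |p i - q i|) ^ 2)
    (p0 : Fin n → ℝ)
    (hp0 : ∀ i, p0 i = (μ {x : Fin n → ℝ | ∀ j, x j ≤ x i}).toReal) :
    p0 ∈ {p : Fin n → ℝ | ∑ i, p i = 1 ∧ ∀ i, 0 ≤ p i} ∧
    (∀ p ∈ {p : Fin n → ℝ | ∑ i, p i = 1 ∧ ∀ i, 0 ≤ p i}, Estar p0 ≤ Estar p) ∧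
    (∀ p ∈ {p : Fin n → ℝ | ∑ i, p i = 1 ∧ ∀ i, 0 ≤ p i}, p ≠ p0 →
      Estar p0 < Estar p) ∧
    Estar p0 = -∫ x, (⨆ i : Fin n, x i) ∂μ ∧
    (∀ p ∈ {p : Fin n → ℝ | ∑ i, p i = 1 ∧ ∀ i, 0 ≤ p i},
      -∫ x, (⨆ i : Fin n, x i) ∂μ ≤ Estar p) := by
  have hnn : Nonempty (Fin n) := ⟨⟨0, by omega⟩⟩
  set A : Fin n → Set (Fin n → ℝ) := fun i => {x | ∀ j, x j ≤ x i} with hA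
  -- measurability of the cells
  have hAm : ∀ i, MeasurableSet (A i) := by
    intro i
    have h1 : A i = ⋂ j, {x : Fin n → ℝ | x j ≤ x i} := by
      ext x; simp [hA, Set.mem_iInter]
    rw [h1]
    exact MeasurableSet.iInter fun j =>
      measurableSet_le (measurable_pi_apply j) (measurable_pi_apply i)
  -- the cells cover everything
  have hcover : (⋃ i, A i) = Set.univ := by
    ext x
    simp only [Set.mem_iUnion, Set.mem_univ, iff_true]
    obtain ⟨i, hi⟩ := Finite.exists_max x
    exact ⟨i, hi⟩
  -- pairwise a.e. disjoint
  have hdisj : Pairwise (Function.onFun (AEDisjoint μ) A) := by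
    intro i j hij
    have hsub : A i ∩ A j ⊆ {x : Fin n → ℝ | x i = x j} := by
      rintro x ⟨hxi, hxj⟩
      exact le_antisymm (hxj i) (hxi j)
    have hker : {x : Fin n → ℝ | x i = x j} =
        ↑(LinearMap.ker ((LinearMap.proj i : (Fin n → ℝ) →ₗ[ℝ] ℝ) - LinearMap.proj j)) := by
      ext x
      simp [LinearMap.mem_ker, sub_eq_zero]
    have hv0 : (volume : Measure (Fin n → ℝ)) {x : Fin n → ℝ | x i = x j} = 0 := by
      rw [hker]
      apply Measure.addHaar_submodule
      intro htop
      have hmem : (Pi.single i 1 : Fin n → ℝ) ∈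
          LinearMap.ker ((LinearMap.proj i : (Fin n → ℝ) →ₗ[ℝ] ℝ) - LinearMap.proj j) := by
        rw [htop]; trivial
      simp only [LinearMap.mem_ker, LinearMap.sub_apply, LinearMap.proj_apply] at hmem
      rw [Pi.single_eq_same, Pi.single_eq_of_ne hij.symm] at hmem
      norm_num at hmem
    exact measure_mono_null hsub (hac hv0)
  -- total mass
  have hsum1 : ∑ i, μ (A i) = 1 := by
    rw [← tsum_fintype (L := SummationFilter.unconditional _), ← measure_iUnion₀ hdisj (fun i => (hAm i).nullMeasurableSet),
      hcover, measure_univ]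
  -- p0 ∈ Δ
  have hp0mem : p0 ∈ {p : Fin n → ℝ | ∑ i, p i = 1 ∧ ∀ i, 0 ≤ p i} := by
    constructor
    · have : ∑ i, p0 i = ∑ i, (μ (A i)).toReal := by
        apply Finset.sum_congr rfl
        intro i _
        exact hp0 i
      rw [this, ← ENNReal.toReal_sum (fun i _ => measure_ne_top μ (A i)), hsum1,
        ENNReal.toReal_one]
    · intro i
      rw [hp0 i]
      exact ENNReal.toReal_nonneg
  -- boundedness facts
  have hbdd : ∀ (u x : Fin n → ℝ), BddAbove (Set.range fun i => u i + x i) :=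
    fun u x => (Set.finite_range _).bddAbove
  have hmeas_sup : ∀ u : Fin n → ℝ, Measurable (fun x : Fin n → ℝ => ⨆ i, (u i + x i)) :=
    fun u => Measurable.iSup fun i => measurable_const.add (measurable_pi_apply i)
  -- integrability of the max
  have hint_sup : ∀ u : Fin n → ℝ, Integrable (fun x : Fin n → ℝ => ⨆ i, (u i + x i)) μ := by
    intro u
    have hgint : Integrable (fun x : Fin n → ℝ => ∑ i, |u i + x i|) μ :=
      integrable_finset_sum _ fun i _ => ((integrable_const (u i)).add (hint i)).abs
    refine hgint.mono' (hmeas_sup u).aestronglyMeasurable ?_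
    filter_upwards with x
    rw [Real.norm_eq_abs, abs_le]
    constructor
    · obtain ⟨i⟩ := hnn
      calc -(∑ j, |u j + x j|) ≤ -(|u i + x i|) := by
            apply neg_le_neg
            exact Finset.single_le_sum (f := fun j => |u j + x j|)
              (fun j _ => abs_nonneg _) (Finset.mem_univ i)
        _ ≤ u i + x i := neg_abs_le _
        _ ≤ ⨆ j, (u j + x j) := le_ciSup (hbdd u x) i
    · apply ciSup_le
      intro i
      calc u i + x i ≤ |u i + x i| := le_abs_self _
        _ ≤ ∑ j, |u j + x j| :=
          Finset.single_le_sum (f := fun j => |u j + x j|)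
            (fun j _ => abs_nonneg _) (Finset.mem_univ i)
  -- key upper bound on the conjugate candidates
  have hEub : ∀ p ∈ {p : Fin n → ℝ | ∑ i, p i = 1 ∧ ∀ i, 0 ≤ p i}, ∀ u : Fin n → ℝ,
      ∑ i, p i * u i - E u ≤ -∑ i, p i * ∫ x, x i ∂μ := by
    intro p hp u
    have hint_comb : ∀ i : Fin n, Integrable (fun x : Fin n → ℝ => p i * (u i + x i)) μ :=
      fun i => (((integrable_const (u i)).add (hint i)).const_mul _)
    have hpt : ∀ x : Fin n → ℝ, ∑ i, p i * (u i + x i) ≤ ⨆ j, (u j + x j) := by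
      intro x
      calc ∑ i, p i * (u i + x i) ≤ ∑ i, p i * (⨆ j, (u j + x j)) :=
            Finset.sum_le_sum fun i _ =>
              mul_le_mul_of_nonneg_left (le_ciSup (hbdd u x) i) (hp.2 i)
        _ = ⨆ j, (u j + x j) := by rw [← Finset.sum_mul, hp.1, one_mul]
    have hle : ∫ x, (∑ i, p i * (u i + x i)) ∂μ ≤ E u := by
      rw [hE u]
      exact integral_mono (integrable_finset_sum _ fun i _ => hint_comb i) (hint_sup u)
        hpt
    have heq : ∫ x, (∑ i, p i * (u i + x i)) ∂μ
        = ∑ i, p i * u i + ∑ i, p i * ∫ x, x i ∂μ := by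
      rw [integral_finset_sum _ fun i _ => hint_comb i, ← Finset.sum_add_distrib]
      apply Finset.sum_congr rfl
      intro i _
      rw [integral_const_mul, integral_add (integrable_const (u i)) (hint i),
        integral_const, probReal_univ, one_smul]
      ring
    linarith [heq ▸ hle]
  -- the sup set is nonempty and bounded above
  have hSne : ∀ p : Fin n → ℝ,
      {y : ℝ | ∃ u : Fin n → ℝ, y = ∑ i, p i * u i - E u}.Nonempty :=
    fun p => ⟨∑ i, p i * (0 : Fin n → ℝ) i - E 0, 0, rfl⟩
  have hSbdd : ∀ p ∈ {p : Fin n → ℝ | ∑ i, p i = 1 ∧ ∀ i, 0 ≤ p i},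
      BddAbove {y : ℝ | ∃ u : Fin n → ℝ, y = ∑ i, p i * u i - E u} := by
    intro p hp
    refine ⟨-∑ i, p i * ∫ x, x i ∂μ, ?_⟩
    rintro y ⟨u, rfl⟩
    exact hEub p hp u
  -- E 0 equals the integral of the max of x
  have hE0 : E 0 = ∫ x, (⨆ i : Fin n, x i) ∂μ := by
    rw [hE 0]
    congr 1
    ext x
    congr 1
    ext i
    simp
  -- lower bound for every p ∈ Δ
  have hlb : ∀ p ∈ {p : Fin n → ℝ | ∑ i, p i = 1 ∧ ∀ i, 0 ≤ p i},
      -∫ x, (⨆ i : Fin n, x i) ∂μ ≤ Estar p := by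
    intro p hp
    rw [hEstar p]
    apply le_csSup (hSbdd p hp)
    refine ⟨0, ?_⟩
    simp [hE0]
  -- decomposition of integrals over the cells
  have hdecomp : ∀ f : (Fin n → ℝ) → ℝ, Integrable f μ →
      ∫ x, f x ∂μ = ∑ i, ∫ x in A i, f x ∂μ := by
    intro f hf
    have h1 : ∫ x in ⋃ i, A i, f x ∂μ = ∑' i, ∫ x in A i, f x ∂μ :=
      integral_iUnion_ae (fun i => (hAm i).nullMeasurableSet) hdisj
        (by rw [hcover]; exact hf.integrableOn)
    rw [hcover, Measure.restrict_univ] at h1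
    rw [h1, tsum_fintype]
  -- Estar p0 ≤ -∫ max
  have hub : Estar p0 ≤ -∫ x, (⨆ i : Fin n, x i) ∂μ := by
    rw [hEstar p0]
    apply csSup_le (hSne p0)
    rintro y ⟨u, rfl⟩
    -- suffices: ∑ p0 i * u i + ∫ max x ≤ E u
    have key : ∑ i, p0 i * u i + ∫ x, (⨆ i : Fin n, x i) ∂μ ≤ E u := by
      have hmax_int : Integrable (fun x : Fin n → ℝ => ⨆ i : Fin n, x i) μ := by
        have := hint_sup 0
        simpa using this
      have h1 : ∫ x, (⨆ i : Fin n, x i) ∂μ = ∑ i, ∫ x in A i, x i ∂μ := by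
        rw [hdecomp _ hmax_int]
        apply Finset.sum_congr rfl
        intro i _
        apply setIntegral_congr_fun (hAm i)
        intro x hx
        exact le_antisymm (ciSup_le fun j => hx j)
          (le_ciSup ((Set.finite_range _).bddAbove) i)
      have h2 : ∀ i : Fin n, p0 i * u i + ∫ x in A i, x i ∂μ
          = ∫ x in A i, (u i + x i) ∂μ := by
        intro i
        rw [integral_add (integrableOn_const (C := u i) (measure_ne_top _ _))
          ((hint i).integrableOn), setIntegral_const, hp0 i]
        simp [mul_comm, Measure.real, hA]
      have h3 : ∀ i : Fin n, ∫ x in A i, (u i + x i) ∂μ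
          ≤ ∫ x in A i, (⨆ j, (u j + x j)) ∂μ := by
        intro i
        apply setIntegral_mono_on
        · exact ((integrable_const (u i)).add (hint i)).integrableOn
        · exact (hint_sup u).integrableOn
        · exact hAm i
        · intro x _
          exact le_ciSup (hbdd u x) i
      calc ∑ i, p0 i * u i + ∫ x, (⨆ i : Fin n, x i) ∂μ
          = ∑ i, (p0 i * u i + ∫ x in A i, x i ∂μ) := by
            rw [h1, Finset.sum_add_distrib]
        _ = ∑ i, ∫ x in A i, (u i + x i) ∂μ := by
            exact Finset.sum_congr rfl fun i _ => h2 i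
        _ ≤ ∑ i, ∫ x in A i, (⨆ j, (u j + x j)) ∂μ :=
            Finset.sum_le_sum fun i _ => h3 i
        _ = ∫ x, (⨆ j, (u j + x j)) ∂μ := (hdecomp _ (hint_sup u)).symm
        _ = E u := (hE u).symm
    linarith
  have hval : Estar p0 = -∫ x, (⨆ i : Fin n, x i) ∂μ :=
    le_antisymm hub (hlb p0 hp0mem)
  -- minimizer
  have hmin : ∀ p ∈ {p : Fin n → ℝ | ∑ i, p i = 1 ∧ ∀ i, 0 ≤ p i}, Estar p0 ≤ Estar p := by
    intro p hp
    rw [hval]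
    exact hlb p hp
  -- strict minimizer via strong convexity
  have hstrict : ∀ p ∈ {p : Fin n → ℝ | ∑ i, p i = 1 ∧ ∀ i, 0 ≤ p i}, p ≠ p0 →
      Estar p0 < Estar p := by
    intro p hp hne
    by_contra hcon
    push_neg at hcon
    have heq : Estar p = Estar p0 := le_antisymm hcon (hmin p hp)
    set m : Fin n → ℝ := (1/2 : ℝ) • p + (1 - 1/2 : ℝ) • p0 with hm
    have hmmem : m ∈ {p : Fin n → ℝ | ∑ i, p i = 1 ∧ ∀ i, 0 ≤ p i} := by
      constructor
      · have : ∑ i, m i = (1/2 : ℝ) * ∑ i, p i + (1/2 : ℝ) * ∑ i, p0 i := by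
          rw [Finset.mul_sum, Finset.mul_sum, ← Finset.sum_add_distrib]
          apply Finset.sum_congr rfl
          intro i _
          simp only [hm, Pi.add_apply, Pi.smul_apply, smul_eq_mul]
          ring
        rw [this, hp.1, hp0mem.1]
        norm_num
      · intro i
        have h1 : m i = (1/2 : ℝ) * p i + (1/2 : ℝ) * p0 i := by
          simp only [hm, Pi.add_apply, Pi.smul_apply, smul_eq_mul]; ring
        rw [h1]
        have := hp.2 i
        have := hp0mem.2 i
        linarith
    have hD : 0 < ∑ i, |p i - p0 i| := by
      have hex : ∃ i, p i ≠ p0 i := by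
        by_contra hall
        push_neg at hall
        exact hne (funext hall)
      obtain ⟨i, hi⟩ := hex
      have h1 : 0 < |p i - p0 i| := abs_pos.2 (sub_ne_zero.2 hi)
      calc (0 : ℝ) < |p i - p0 i| := h1
        _ ≤ ∑ j, |p j - p0 j| :=
          Finset.single_le_sum (f := fun j => |p j - p0 j|)
            (fun j _ => abs_nonneg _) (Finset.mem_univ i)
    have hsc2 := hsc p hp p0 hp0mem (1/2) (by norm_num)
    rw [← hm] at hsc2
    have hmlb := hlb m hmmem
    rw [← hval] at hmlb
    have hD2 : 0 < (∑ i, |p i - p0 i|) ^ 2 := by positivity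
    nlinarith [hsc2, hmlb, heq, mul_pos hβ hD2]
  exact ⟨hp0mem, hmin, hstrict, hval, hlb⟩
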